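/- For all integers n ≥ 0 and real l > 1, the identity ∑_{k=0}^{n} C(n,k) (k−1) (l+n−1)^{n−k−1} = −l (l+n−1)^{−1} (l+n)^{n−1} holds. -/

import Mathlib

open Finset

lemma aux0 (n : ℕ) (x : ℝ) :
    ∑ k ∈ range (n + 1), (n.choose k : ℝ) * x ^ (n - k) = (x + 1) ^ n := by
  rw [show x + 1 = 1 + x from add_comm _ _, add_pow]
  exact Finset.sum_congr rfl fun k hk => by ring

lemma aux1 (m : ℕ) (x : ℝ) :
    ∑ k ∈ range (m + 2), ((m + 1).choose k : ℝ) * k * x ^ (m + 1 - k)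
      = (m + 1) * (x + 1) ^ m := by
  rw [Finset.sum_range_succ']
  simp only [Nat.cast_zero, mul_zero, zero_mul, add_zero]
  have : ∀ j ∈ range (m + 1),
      ((m + 1).choose (j + 1) : ℝ) * ((j + 1 : ℕ) : ℝ) * x ^ (m + 1 - (j + 1))
        = (m + 1) * ((m.choose j : ℝ) * x ^ (m - j)) := by
    intro j hj
    have h' : ((m + 1) * m.choose j : ℕ) = ((m + 1).choose (j + 1) * (j + 1) : ℕ) :=
      Nat.add_one_mul_choose_eq m j
    have hc := congrArg (Nat.cast (R := ℝ)) h'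
    push_cast at hc
    rw [Nat.succ_sub_succ]
    push_cast
    linear_combination -x ^ (m - j) * hc
  rw [Finset.sum_congr rfl this, ← Finset.mul_sum, aux0 m x]

theorem stmt_0 (n : ℕ) (l : ℝ) (hl : 1 < l) :
    ∑ k ∈ Finset.range (n + 1),
        (n.choose k : ℝ) * ((k : ℝ) - 1) * (l + n - 1) ^ ((n : ℤ) - k - 1)
      = -l * (l + n - 1)⁻¹ * (l + n) ^ ((n : ℤ) - 1) := by
  have hx : (0:ℝ) < l + n - 1 := by
    have : (0:ℝ) ≤ n := Nat.cast_nonneg n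
    linarith
  have hx0 : (l + n - 1) ≠ 0 := ne_of_gt hx
  set x : ℝ := l + n - 1 with hxdef
  -- rewrite each term with natural powers times x⁻¹
  have hterm : ∀ k ∈ range (n + 1),
      (n.choose k : ℝ) * ((k : ℝ) - 1) * x ^ ((n : ℤ) - k - 1)
        = (n.choose k : ℝ) * ((k : ℝ) - 1) * x ^ (n - k) * x⁻¹ := by
    intro k hk
    have hkn : k ≤ n := Nat.lt_succ_iff.mp (Finset.mem_range.mp hk)
    have he : (n : ℤ) - k - 1 = ((n - k : ℕ) : ℤ) - 1 := by
      have : ((n - k : ℕ) : ℤ) = (n : ℤ) - k := by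
        simp [Nat.cast_sub hkn]
      omega
    rw [he, zpow_sub₀ hx0, zpow_one, zpow_natCast, div_eq_mul_inv]
    ring
  rw [Finset.sum_congr rfl hterm, ← Finset.sum_mul]
  have key : ∑ k ∈ range (n + 1), (n.choose k : ℝ) * ((k : ℝ) - 1) * x ^ (n - k)
      = -l * (l + n) ^ ((n : ℤ) - 1) := by
    cases n with
    | zero =>
      simp [hxdef]
      exact (mul_inv_cancel₀ (by linarith)).symm
    | succ m =>
      have split : ∀ k ∈ range (m + 2),
          ((m + 1).choose k : ℝ) * ((k : ℝ) - 1) * x ^ (m + 1 - k)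
            = ((m + 1).choose k : ℝ) * k * x ^ (m + 1 - k)
              - ((m + 1).choose k : ℝ) * x ^ (m + 1 - k) := by
        intro k hk; ring
      rw [Finset.sum_congr rfl split, Finset.sum_sub_distrib, aux1, aux0]
      have hxl : x + 1 = l + (m + 1 : ℕ) := by push_cast [hxdef]; ring
      have he2 : ((m + 1 : ℕ) : ℤ) - 1 = (m : ℤ) := by push_cast; ring
      rw [he2, hxl]
      have : (l + ((m : ℝ) + 1)) ^ ((m : ℤ)) = (l + ((m : ℝ) + 1)) ^ m := zpow_natCast _ m
      push_cast at this ⊢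
      rw [this]
      ring
  rw [key]
  ring
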